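/- Let $N \ge 1$ and let $u_{k,N} : [0,\infty) \to [0,\infty)$, $1 \le k \le N$, be continuous functions satisfying $u_{k,N}(t) \le k \int_0^t \big(1 + \sum_{l=k+1}^{N} u_{l,N}(s)\big) ds$ for all $t \ge 0$. Then $u_{1,N}(t) \le t^{1/2}(1 + t^{1/2})^{2N}$ for all $t \ge 0$. -/

import Mathlib

open Finset

private lemma nat_coeff_step (N j m : ℕ) (hm : m ≤ j) :
    (N - j) * (N.choose m * j.choose m) ≤ (m + 1) * (N.choose (m + 1) * j.choose m) := by
  have h : N.choose (m+1) * (m+1) = N.choose m * (N - m) := Nat.choose_succ_right_eq N m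
  calc (N - j) * (N.choose m * j.choose m) ≤ (N - m) * (N.choose m * j.choose m) :=
        Nat.mul_le_mul_right _ (by omega)
    _ = (m+1) * (N.choose (m+1) * j.choose m) := by
        rw [show (N-m) * (N.choose m * j.choose m) = (N.choose m * (N-m)) * j.choose m by ring,
            ← h]; ring

private lemma nat_coeff_final (N m : ℕ) (hN : 1 ≤ N) :
    N.choose m * (N-1).choose m ≤ (m + 1) * ((2*N).choose (2*m+1)) := by
  have hvdm : N.choose m * N.choose (m+1) ≤ (2*N).choose (2*m+1) := by
    rw [two_mul, Nat.add_choose_eq]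
    exact Finset.single_le_sum (f := fun ij : ℕ × ℕ => N.choose ij.1 * N.choose ij.2)
      (fun _ _ => Nat.zero_le _)
      (a := (m, m+1)) (by simp [Finset.mem_antidiagonal]; omega)
  have h1 : N * (N-1).choose m = N.choose (m+1) * (m+1) := by
    have := Nat.add_one_mul_choose_eq (N-1) m
    rw [show N-1+1 = N by omega] at this
    simpa using this
  calc N.choose m * (N-1).choose m ≤ N * (N.choose m * (N-1).choose m) :=
        Nat.le_mul_of_pos_left _ (by omega)
    _ = (m+1) * (N.choose m * N.choose (m+1)) := by
        rw [show N * (N.choose m * (N-1).choose m) = N.choose m * (N * (N-1).choose m) by ring,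
            h1]; ring
    _ ≤ (m+1) * ((2*N).choose (2*m+1)) := Nat.mul_le_mul_left _ hvdm

private lemma poly_integral (c : ℕ → ℝ) (n : ℕ) (t : ℝ) :
    (∫ s in (0:ℝ)..t, ∑ m ∈ range n, c m * s ^ m)
      = ∑ m ∈ range n, c m * (t ^ (m+1) / (m+1)) := by
  rw [intervalIntegral.integral_finset_sum (f := fun m (s : ℝ) => c m * s ^ m) (fun m _ =>
    ((continuous_const.mul (continuous_pow m)).intervalIntegrable _ _))]
  refine Finset.sum_congr rfl fun m _ => ?_
  rw [intervalIntegral.integral_const_mul, integral_pow]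
  simp

private lemma g_step (N j : ℕ) (t : ℝ) :
    (∑ m ∈ range (j+1+1), ((N.choose m : ℝ) * ((j+1).choose m)) * t^m)
      = (∑ m ∈ range (j+1), ((N.choose m : ℝ) * (j.choose m)) * t^m)
      + ∑ m ∈ range (j+1), ((N.choose (m+1) : ℝ) * (j.choose m)) * t^(m+1) := by
  rw [Finset.sum_range_succ' (fun m => ((N.choose m : ℝ) * ((j+1).choose m)) * t^m) (j+1),
      Finset.sum_range_succ' (fun m => ((N.choose m : ℝ) * (j.choose m)) * t^m) j]
  have hext : (∑ m ∈ range j, ((N.choose (m+1) : ℝ) * (j.choose (m+1))) * t^(m+1))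
      = ∑ m ∈ range (j+1), ((N.choose (m+1) : ℝ) * (j.choose (m+1))) * t^(m+1) := by
    rw [Finset.sum_range_succ]
    simp [Nat.choose_succ_self]
  rw [hext]
  have : (∑ m ∈ range (j+1), ((N.choose (m+1) : ℝ) * ((j+1).choose (m+1))) * t^(m+1))
      = ∑ m ∈ range (j+1), (((N.choose (m+1) : ℝ) * (j.choose (m+1))) * t^(m+1)
          + ((N.choose (m+1) : ℝ) * (j.choose m)) * t^(m+1)) := by
    refine Finset.sum_congr rfl fun m _ => ?_
    rw [Nat.choose_succ_succ]
    push_cast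
    ring
  rw [this, Finset.sum_add_distrib]
  simp
  ring

private lemma key_bound
    (N : ℕ) (u : ℕ → ℝ → ℝ)
    (hcont : ∀ k, 1 ≤ k → k ≤ N → Continuous (u k))
    (hineq : ∀ k, 1 ≤ k → k ≤ N → ∀ t, 0 ≤ t →
      u k t ≤ (k : ℝ) * ∫ s in (0:ℝ)..t, (1 + ∑ l ∈ Finset.Icc (k+1) N, u l s)) :
    ∀ j : ℕ, j ≤ N → ∀ t : ℝ, 0 ≤ t →
      1 + ∑ l ∈ Finset.Icc (N - j + 1) N, u l t
        ≤ ∑ m ∈ Finset.range (j + 1), ((N.choose m : ℝ) * (j.choose m)) * t ^ m := by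
  intro j
  induction j with
  | zero =>
    intro _ t ht
    rw [Finset.Icc_eq_empty (by omega)]
    simp
  | succ j ih =>
    intro hjN t ht
    have hj : j ≤ N := by omega
    have hk1 : 1 ≤ N - j := by omega
    have hc : Continuous (fun s => 1 + ∑ l ∈ Finset.Icc (N - j + 1) N, u l s) := by
      apply continuous_const.add
      refine continuous_finset_sum _ (fun l hl => ?_)
      simp only [Finset.mem_Icc] at hl
      exact hcont l (by omega) hl.2
    have hgc : Continuous (fun s : ℝ =>
        ∑ m ∈ Finset.range (j+1), ((N.choose m : ℝ) * (j.choose m)) * s ^ m) :=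
      continuous_finset_sum _ (fun m _ => continuous_const.mul (continuous_pow m))
    have hsplit : Finset.Icc (N - (j+1) + 1) N = insert (N - j) (Finset.Icc (N - j + 1) N) := by
      ext x; simp only [Finset.mem_Icc, Finset.mem_insert]; omega
    rw [hsplit, Finset.sum_insert (by simp only [Finset.mem_Icc]; omega)]
    have hu : u (N - j) t ≤ ((N - j : ℕ) : ℝ) *
        ∑ m ∈ Finset.range (j+1), ((N.choose m : ℝ) * (j.choose m)) * (t ^ (m+1) / (m+1)) := by
      calc u (N - j) t ≤ ((N - j : ℕ) : ℝ) * ∫ s in (0:ℝ)..t,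
            (1 + ∑ l ∈ Finset.Icc (N - j + 1) N, u l s) := hineq (N-j) hk1 (by omega) t ht
        _ ≤ ((N - j : ℕ) : ℝ) * ∫ s in (0:ℝ)..t,
            ∑ m ∈ Finset.range (j+1), ((N.choose m : ℝ) * (j.choose m)) * s ^ m := by
            refine mul_le_mul_of_nonneg_left ?_ (by positivity)
            refine intervalIntegral.integral_mono_on ht (hc.intervalIntegrable _ _)
              (hgc.intervalIntegrable _ _) (fun s hs => ih hj s hs.1)
        _ = _ := by rw [poly_integral]
    have hstep : ((N - j : ℕ) : ℝ) *
        (∑ m ∈ Finset.range (j+1), ((N.choose m : ℝ) * (j.choose m)) * (t ^ (m+1) / (m+1)))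
        ≤ ∑ m ∈ Finset.range (j+1), ((N.choose (m+1) : ℝ) * (j.choose m)) * t^(m+1) := by
      rw [Finset.mul_sum]
      refine Finset.sum_le_sum fun m hm => ?_
      simp only [Finset.mem_range] at hm
      have h' : ((N - j : ℕ) : ℝ) * ((N.choose m : ℝ) * (j.choose m))
          ≤ ((m:ℝ) + 1) * ((N.choose (m+1) : ℝ) * (j.choose m)) := by
        exact_mod_cast nat_coeff_step N j m (by omega)
      calc ((N - j : ℕ) : ℝ) * (((N.choose m : ℝ) * (j.choose m)) * (t ^ (m+1) / (m+1)))
          = (((N - j : ℕ) : ℝ) * ((N.choose m : ℝ) * (j.choose m))) * t ^ (m+1) / ((m:ℝ)+1) := by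
            push_cast; ring
        _ ≤ (((m:ℝ)+1) * ((N.choose (m+1) : ℝ) * (j.choose m))) * t ^ (m+1) / ((m:ℝ)+1) := by
            gcongr
        _ = ((N.choose (m+1) : ℝ) * (j.choose m)) * t ^ (m+1) := by
            field_simp
    calc 1 + (u (N-j) t + ∑ l ∈ Finset.Icc (N - j + 1) N, u l t)
        = (1 + ∑ l ∈ Finset.Icc (N - j + 1) N, u l t) + u (N-j) t := by ring
      _ ≤ (∑ m ∈ Finset.range (j+1), ((N.choose m : ℝ) * (j.choose m)) * t ^ m)
          + ((N - j : ℕ) : ℝ) * ∑ m ∈ Finset.range (j+1),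
              ((N.choose m : ℝ) * (j.choose m)) * (t ^ (m+1) / (m+1)) :=
          add_le_add (ih hj t ht) hu
      _ ≤ (∑ m ∈ Finset.range (j+1), ((N.choose m : ℝ) * (j.choose m)) * t ^ m)
          + ∑ m ∈ Finset.range (j+1), ((N.choose (m+1) : ℝ) * (j.choose m)) * t^(m+1) :=
          add_le_add_right hstep _
      _ = ∑ m ∈ Finset.range (j+1+1), ((N.choose m : ℝ) * ((j+1).choose m)) * t ^ m :=
          (g_step N j t).symm

private lemma final_bound (N : ℕ) (hN : 1 ≤ N) (t : ℝ) (ht : 0 ≤ t) :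
    ∑ m ∈ range N, ((N.choose m : ℝ) * ((N-1).choose m)) * (t ^ (m+1) / (m+1))
      ≤ Real.sqrt t * (1 + Real.sqrt t) ^ (2*N) := by
  set s := Real.sqrt t with hs
  have hs0 : 0 ≤ s := Real.sqrt_nonneg t
  have hts : t = s^2 := (Real.sq_sqrt ht).symm
  calc ∑ m ∈ range N, ((N.choose m : ℝ) * ((N-1).choose m)) * (t ^ (m+1) / (m+1))
      ≤ ∑ m ∈ range N, (((2*N).choose (2*m+1) : ℝ)) * s ^ (2*m+1+1) := by
        refine Finset.sum_le_sum fun m _ => ?_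
        have h' : ((N.choose m : ℝ) * ((N-1).choose m))
            ≤ ((m:ℝ)+1) * ((2*N).choose (2*m+1) : ℝ) := by
          exact_mod_cast nat_coeff_final N m hN
        have hpow : t ^ (m+1) = s ^ (2*m+1+1) := by
          rw [hts, ← pow_mul]; ring_nf
        rw [hpow]
        calc ((N.choose m : ℝ) * ((N-1).choose m)) * (s ^ (2*m+1+1) / (m+1))
            = ((N.choose m : ℝ) * ((N-1).choose m)) * s ^ (2*m+1+1) / ((m:ℝ)+1) := by
              push_cast; ring
          _ ≤ (((m:ℝ)+1) * ((2*N).choose (2*m+1) : ℝ)) * s ^ (2*m+1+1) / ((m:ℝ)+1) := by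
              gcongr
          _ = (((2*N).choose (2*m+1) : ℝ)) * s ^ (2*m+1+1) := by field_simp
    _ = ∑ k ∈ (range N).image (fun m => 2*m+1), ((2*N).choose k : ℝ) * s ^ (k+1) := by
        rw [Finset.sum_image (by intro a _ b _ h; simp only at h; omega)]
    _ ≤ ∑ k ∈ range (2*N+1), ((2*N).choose k : ℝ) * s ^ (k+1) := by
        refine Finset.sum_le_sum_of_subset_of_nonneg ?_ (fun k _ _ => by positivity)
        intro k hk
        simp only [Finset.mem_image, Finset.mem_range] at hk ⊢
        obtain ⟨a, ha, rfl⟩ := hk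
        omega
    _ = s * (1 + s) ^ (2*N) := by
        rw [add_comm (1:ℝ) s, add_pow, Finset.mul_sum]
        refine Finset.sum_congr rfl fun k _ => ?_
        simp only [one_pow]
        ring

theorem finite_section_first_block_bound
    (N : ℕ) (hN : 1 ≤ N) (u : ℕ → ℝ → ℝ)
    (hcont : ∀ k, 1 ≤ k → k ≤ N → Continuous (u k))
    (hnonneg : ∀ k, 1 ≤ k → k ≤ N → ∀ t, 0 ≤ t → 0 ≤ u k t)
    (hineq : ∀ k, 1 ≤ k → k ≤ N → ∀ t, 0 ≤ t →
      u k t ≤ (k : ℝ) * ∫ s in (0:ℝ)..t, (1 + ∑ l ∈ Finset.Icc (k+1) N, u l s)) :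
    ∀ t : ℝ, 0 ≤ t → u 1 t ≤ Real.sqrt t * (1 + Real.sqrt t) ^ (2 * N) := by
  intro t ht
  have hkey := key_bound N u hcont hineq (N-1) (by omega)
  rw [show N - (N-1) + 1 = 2 by omega] at hkey
  have hc : Continuous (fun s => 1 + ∑ l ∈ Finset.Icc 2 N, u l s) := by
    apply continuous_const.add
    refine continuous_finset_sum _ (fun l hl => ?_)
    simp only [Finset.mem_Icc] at hl
    exact hcont l (by omega) hl.2
  have hgc : Continuous (fun s : ℝ =>
      ∑ m ∈ Finset.range (N-1+1), ((N.choose m : ℝ) * ((N-1).choose m)) * s ^ m) :=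
    continuous_finset_sum _ (fun m _ => continuous_const.mul (continuous_pow m))
  calc u 1 t ≤ ((1:ℕ) : ℝ) * ∫ s in (0:ℝ)..t, (1 + ∑ l ∈ Finset.Icc 2 N, u l s) :=
        hineq 1 le_rfl hN t ht
    _ ≤ ((1:ℕ) : ℝ) * ∫ s in (0:ℝ)..t,
        ∑ m ∈ Finset.range (N-1+1), ((N.choose m : ℝ) * ((N-1).choose m)) * s ^ m := by
        refine mul_le_mul_of_nonneg_left ?_ (by positivity)
        exact intervalIntegral.integral_mono_on ht (hc.intervalIntegrable _ _)
          (hgc.intervalIntegrable _ _) (fun s hs => hkey s hs.1)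
    _ = ∑ m ∈ Finset.range N, ((N.choose m : ℝ) * ((N-1).choose m)) * (t ^ (m+1) / (m+1)) := by
        rw [poly_integral, show N-1+1 = N by omega]
        simp
    _ ≤ Real.sqrt t * (1 + Real.sqrt t) ^ (2 * N) := final_bound N hN t ht
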